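/- Proposition 4.1 in arithmetic form: let p, q, a, b : Fin 3 → ℤ satisfy p 1 + p 2 + p 3 = q 1 + q 2 + q 3 and a 1 + a 2 + a 3 = b 1 + b 2 + b 3. Assume: (i) two of the entries of p coincide or two of the entries of q coincide (the Eschenburg 7-orbifold E⁷_{p,q} has cohomogeneity two); (ii) N σ ≠ 0 for every permutation σ of {1,2,3} (the circle action on E⁷_{p,q} is almost free); (iii) either |N σ| = 1 for all three even permutations σ, or |N σ| = 1 for all three odd permutations σ (three vertices of the same parity are regular); (iv) either no q i lies in the closed interval [min(p 1, p 2, p 3), max(p 1, p 2, p 3)], or no p i lies in the closed interval [min(q 1, q 2, q 3), max(q 1, q 2, q 3)] (E⁷_{p,q} or E⁷_{q,p} admits positive curvature). Then |N σ| = 1 for every permutation σ of {1,2,3}; that is, the 2-torus acts freely on SU(3) and the quotient is a smooth manifold. -/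

import Mathlib

/-- Core arithmetic lemma, case "all eᵢ ≥ 1". -/
lemma esch_core0 (e0 e1 e2 β η0 η1 η2 : ℤ)
    (h0 : 1 ≤ e0) (h1 : 1 ≤ e1) (h2 : 1 ≤ e2) (hβ : β ≠ 0)
    (hη0 : |η0| = 1) (hη1 : |η1| = 1) (hη2 : |η2| = 1)
    (hm : e0*η0 + e1*η1 + e2*η2 + β*(e0*e1 + e1*e2 + e2*e0) = 0) :
    |η0 + (e1+e2)*β| = 1 ∧ |η1 + (e0+e2)*β| = 1 ∧ |η2 + (e0+e1)*β| = 1 := by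
  have A0 := (abs_eq (by norm_num : (0:ℤ) ≤ 1)).mp hη0
  have A1 := (abs_eq (by norm_num : (0:ℤ) ≤ 1)).mp hη1
  have A2 := (abs_eq (by norm_num : (0:ℤ) ≤ 1)).mp hη2
  obtain ⟨s2, hs2⟩ : ∃ s, s = e0*e1 + e1*e2 + e2*e0 := ⟨_, rfl⟩
  obtain ⟨L, hL⟩ : ∃ l, l = e0*η0 + e1*η1 + e2*η2 := ⟨_, rfl⟩
  have hLle : L ≤ e0 + e1 + e2 := by
    rcases A0 with h|h <;> rcases A1 with h'|h' <;> rcases A2 with h''|h'' <;>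
      rw [hL, h, h', h''] <;> linarith
  have hLge : -(e0 + e1 + e2) ≤ L := by
    rcases A0 with h|h <;> rcases A1 with h'|h' <;> rcases A2 with h''|h'' <;>
      rw [hL, h, h', h''] <;> linarith
  have m01 : (0:ℤ) ≤ (e0-1)*(e1-1) := mul_nonneg (by linarith) (by linarith)
  have m12 : (0:ℤ) ≤ (e1-1)*(e2-1) := mul_nonneg (by linarith) (by linarith)
  have m20 : (0:ℤ) ≤ (e2-1)*(e0-1) := mul_nonneg (by linarith) (by linarith)
  have hs2E : e0 + e1 + e2 ≤ s2 := by rw [hs2]; nlinarith [m01, m12, m20]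
  have hmL : β * s2 = -L := by rw [hs2, hL]; linarith [hm]
  have hs2pos : 0 < s2 := by linarith
  have hid : (e0-1)*(e1-1) + (e1-1)*(e2-1) + (e2-1)*(e0-1) + (e0+e1+e2) - 3
      = s2 - (e0+e1+e2) := by rw [hs2]; ring
  have hkey : e0 + e1 + e2 = 3 ∧ (β = 1 ∨ β = -1) := by
    rcases lt_trichotomy β 0 with hb | hb | hb
    · have hb1 : β ≤ -1 := by omega
      have hp : 0 ≤ (-(β+1))*s2 := mul_nonneg (by linarith) (by linarith)
      have hbs : β * s2 ≤ -s2 := by nlinarith [hp]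
      -- squeeze
      have hE : s2 ≤ e0+e1+e2 := by linarith
      have hsum : e0+e1+e2 = 3 := by linarith [m01, m12, m20, hid]
      have heq : β * s2 = -s2 := by linarith
      have hz : (β + 1) * s2 = 0 := by nlinarith [heq]
      rcases mul_eq_zero.mp hz with h | h
      · exact ⟨hsum, Or.inr (by linarith)⟩
      · omega
    · omega
    · have hb1 : 1 ≤ β := by omega
      have hp : 0 ≤ (β-1)*s2 := mul_nonneg (by linarith) (by linarith)
      have hbs : s2 ≤ β * s2 := by nlinarith [hp]
      have hE : s2 ≤ e0+e1+e2 := by linarith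
      have hsum : e0+e1+e2 = 3 := by linarith [m01, m12, m20, hid]
      have heq : β * s2 = s2 := by linarith
      have hz : (β - 1) * s2 = 0 := by nlinarith [heq]
      rcases mul_eq_zero.mp hz with h | h
      · exact ⟨hsum, Or.inl (by linarith)⟩
      · omega
  obtain ⟨hsum, hβ1⟩ := hkey
  have he0 : e0 = 1 := by omega
  have he1 : e1 = 1 := by omega
  have he2 : e2 = 1 := by omega
  subst he0 he1 he2
  have hmaster : η0 + η1 + η2 + 3*β = 0 := by linarith [hm]
  rcases hβ1 with hb | hb <;> subst hb <;>
    rcases A0 with h|h <;> rcases A1 with h'|h' <;> rcases A2 with h''|h'' <;>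
      subst h <;> subst h' <;> subst h'' <;> (revert hmaster; norm_num)

/-- Core arithmetic lemma, mixed-sign case: `e0, e1 ≥ 1`, `e2 ≤ -1`,
with `d0 = -(e1+e2) ≥ 1`, `d1 = -(e0+e2) ≥ 1`. -/
lemma esch_core2 (e0 e1 e2 β η0 η1 η2 : ℤ)
    (h0 : 1 ≤ e0) (h1 : 1 ≤ e1) (h2 : e2 ≤ -1)
    (hd0 : 1 ≤ -(e1+e2)) (hd1 : 1 ≤ -(e0+e2)) (hβ : β ≠ 0)
    (hη0 : |η0| = 1) (hη1 : |η1| = 1) (hη2 : |η2| = 1)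
    (hm : e0*η0 + e1*η1 + e2*η2 + β*(e0*e1 + e1*e2 + e2*e0) = 0) :
    |η0 + (e1+e2)*β| = 1 ∧ |η1 + (e0+e2)*β| = 1 ∧ |η2 + (e0+e1)*β| = 1 := by
  have A0 := (abs_eq (by norm_num : (0:ℤ) ≤ 1)).mp hη0
  have A1 := (abs_eq (by norm_num : (0:ℤ) ≤ 1)).mp hη1
  have A2 := (abs_eq (by norm_num : (0:ℤ) ≤ 1)).mp hη2
  obtain ⟨S, hS⟩ : ∃ s, s = -(e0*e1 + e1*e2 + e2*e0) := ⟨_, rfl⟩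
  obtain ⟨L, hL⟩ : ∃ l, l = e0*η0 + e1*η1 + e2*η2 := ⟨_, rfl⟩
  have hLle : L ≤ e0 + e1 - e2 := by
    rcases A0 with h|h <;> rcases A1 with h'|h' <;> rcases A2 with h''|h'' <;>
      rw [hL, h, h', h''] <;> linarith
  have hLge : -(e0 + e1 - e2) ≤ L := by
    rcases A0 with h|h <;> rcases A1 with h'|h' <;> rcases A2 with h''|h'' <;>
      rw [hL, h, h', h''] <;> linarith
  have hmL : β * S = L := by rw [hS, hL]; linarith [hm]
  -- S ≥ 3
  have c2 : 2 ≤ -e2 := by linarith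
  have hSpos : 3 ≤ S := by
    rw [hS]
    nlinarith [mul_nonneg (by linarith : (0:ℤ) ≤ e0 - 1) (by linarith : (0:ℤ) ≤ -(e1+e2) - 1),
      mul_nonneg (by linarith : (0:ℤ) ≤ e1 - 1) (by linarith : (0:ℤ) ≤ -e2 - 2)]
  -- certificates : S - E + 1 = (-e2-e1-1)*(e0+e1-1) + e1*(e1-1) etc.
  have cert1 : S - (e0+e1-e2) + 1 = (-e2-e1-1)*(e0+e1-1) + e1*(e1-1) := by rw [hS]; ring
  have cert0 : S - (e0+e1-e2) + 1 = (-e2-e0-1)*(e0+e1-1) + e0*(e0-1) := by rw [hS]; ring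
  have pos1 : 0 ≤ (-e2-e1-1)*(e0+e1-1) := mul_nonneg (by linarith) (by linarith)
  have pos0 : 0 ≤ (-e2-e0-1)*(e0+e1-1) := mul_nonneg (by linarith) (by linarith)
  have q1 : 0 ≤ e1*(e1-1) := mul_nonneg (by linarith) (by linarith)
  have q0 : 0 ≤ e0*(e0-1) := mul_nonneg (by linarith) (by linarith)
  -- |β| = 1
  have hβ1 : β = 1 ∨ β = -1 := by
    rcases lt_trichotomy β 0 with hb | hb | hb
    · have hb1 : β ≤ -1 := by omega
      by_contra hcon
      have hb2 : β ≤ -2 := by omega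
      have hp : 0 ≤ (-(β+2))*S := mul_nonneg (by linarith) (by linarith)
      have : β * S ≤ -2*S := by nlinarith [hp]
      linarith
    · omega
    · have hb1 : 1 ≤ β := by omega
      by_contra hcon
      have hb2 : 2 ≤ β := by omega
      have hp : 0 ≤ (β-2)*S := mul_nonneg (by linarith) (by linarith)
      have : 2*S ≤ β * S := by nlinarith [hp]
      linarith
  -- S ≤ E
  have hSE : S ≤ e0 + e1 - e2 := by
    rcases hβ1 with hb | hb <;> subst hb <;> linarith
  have hq0le : e0*(e0-1) ≤ 1 := by linarith [cert0, pos0]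
  have hq1le : e1*(e1-1) ≤ 1 := by linarith [cert1, pos1]
  have he0 : e0 = 1 := by
    by_contra h
    have h2' : (2:ℤ) ≤ e0 := by omega
    have : (2:ℤ)*1 ≤ e0*(e0-1) := mul_le_mul h2' (by omega) (by norm_num) (by linarith)
    linarith
  have he1 : e1 = 1 := by
    by_contra h
    have h2' : (2:ℤ) ≤ e1 := by omega
    have : (2:ℤ)*1 ≤ e1*(e1-1) := mul_le_mul h2' (by omega) (by norm_num) (by linarith)
    linarith
  subst he0 he1
  have he2 : e2 = -2 ∨ e2 = -3 := by
    have : S = -(1*1 + 1*e2 + e2*1) := hS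
    omega
  have hm' : η0 + η1 + e2*η2 + β*(1 + 2*e2) = 0 := by linarith [hm]
  rcases he2 with h|h <;> subst h <;>
    refine ⟨?_, ?_, ?_⟩ <;> rw [abs_eq (by norm_num : (0:ℤ) ≤ 1)] <;> omega

/-- Core arithmetic lemma: dispatcher over sign patterns. -/
lemma esch_core (e0 e1 e2 β η0 η1 η2 : ℤ)
    (hsgn : (0 < e0 * (-(e1+e2)) ∧ 0 < e1 * (-(e0+e2)) ∧ 0 < e2 * (-(e0+e1))) ∨
            (e0 * (-(e1+e2)) < 0 ∧ e1 * (-(e0+e2)) < 0 ∧ e2 * (-(e0+e1)) < 0))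
    (hη0 : |η0| = 1) (hη1 : |η1| = 1) (hη2 : |η2| = 1)
    (hm : e0*η0 + e1*η1 + e2*η2 + β*(e0*e1 + e1*e2 + e2*e0) = 0) :
    |η0 + (e1+e2)*β| = 1 ∧ |η1 + (e0+e2)*β| = 1 ∧ |η2 + (e0+e1)*β| = 1 := by
  rcases eq_or_ne β 0 with hb | hβ
  · subst hb; refine ⟨by simpa, by simpa, by simpa⟩
  have hβ' : -β ≠ 0 := neg_ne_zero.mpr hβ
  rcases hsgn with ⟨x0, x1, x2⟩ | ⟨x0, x1, x2⟩
  · -- e_m d_m > 0 for all m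
    rcases lt_trichotomy e0 0 with s0 | s0 | s0
    · rcases lt_trichotomy e1 0 with s1 | s1 | s1
      · rcases lt_trichotomy e2 0 with s2 | s2 | s2
        · -- (-,-,-) impossible
          exfalso
          rcases mul_pos_iff.mp x2 with ⟨h, _⟩ | ⟨_, h⟩ <;> linarith
        · exfalso; rw [s2] at x2; simp at x2
        · -- (-,-,+)
          have hd0 : 1 ≤ e1 + e2 := by
            rcases mul_pos_iff.mp x0 with ⟨h, _⟩ | ⟨_, h⟩ <;> linarith
          have hd1 : 1 ≤ e0 + e2 := by
            rcases mul_pos_iff.mp x1 with ⟨h, _⟩ | ⟨_, h⟩ <;> linarith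
          obtain ⟨c1, c2, c3⟩ := esch_core2 (-e0) (-e1) (-e2) (-β) η0 η1 η2
            (by linarith) (by linarith) (by linarith) (by linarith) (by linarith) hβ'
            hη0 hη1 hη2 (by linear_combination -hm)
          refine ⟨?_, ?_, ?_⟩
          · rwa [show η0 + (-e1 + -e2) * -β = η0 + (e1+e2)*β by ring] at c1
          · rwa [show η1 + (-e0 + -e2) * -β = η1 + (e0+e2)*β by ring] at c2
          · rwa [show η2 + (-e0 + -e1) * -β = η2 + (e0+e1)*β by ring] at c3
      · exfalso; rw [s1] at x1; simp at x1
      · rcases lt_trichotomy e2 0 with s2 | s2 | s2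
        · -- (-,+,-)  negate → (+,-,+) → core2 ((-e0),(-e2),(-e1))
          have hd0 : 1 ≤ e1 + e2 := by
            rcases mul_pos_iff.mp x0 with ⟨h, _⟩ | ⟨_, h⟩ <;> linarith
          have hd2 : 1 ≤ e0 + e1 := by
            rcases mul_pos_iff.mp x2 with ⟨h, _⟩ | ⟨_, h⟩ <;> linarith
          obtain ⟨c1, c2, c3⟩ := esch_core2 (-e0) (-e2) (-e1) (-β) η0 η2 η1
            (by linarith) (by linarith) (by linarith) (by linarith) (by linarith) hβ'
            hη0 hη2 hη1 (by linear_combination -hm)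
          refine ⟨?_, ?_, ?_⟩
          · rwa [show η0 + (-e2 + -e1) * -β = η0 + (e1+e2)*β by ring] at c1
          · rwa [show η1 + (-e0 + -e2) * -β = η1 + (e0+e2)*β by ring] at c3
          · rwa [show η2 + (-e0 + -e1) * -β = η2 + (e0+e1)*β by ring] at c2
        · exfalso; rw [s2] at x2; simp at x2
        · -- (-,+,+) → core2 (e1,e2,e0)
          have hd1 : 1 ≤ -(e2 + e0) := by
            rcases mul_pos_iff.mp x1 with ⟨_, h⟩ | ⟨h, _⟩ <;> linarith
          have hd2 : 1 ≤ -(e1 + e0) := by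
            rcases mul_pos_iff.mp x2 with ⟨_, h⟩ | ⟨h, _⟩ <;> linarith
          obtain ⟨c1, c2, c3⟩ := esch_core2 e1 e2 e0 β η1 η2 η0
            (by linarith) (by linarith) (by linarith) (by linarith) (by linarith) hβ
            hη1 hη2 hη0 (by linear_combination hm)
          refine ⟨?_, ?_, ?_⟩
          · rwa [show η0 + (e1+e2) * β = η0 + (e1+e2)*β by ring] at c3
          · rwa [show η1 + (e2+e0) * β = η1 + (e0+e2)*β by ring] at c1
          · rwa [show η2 + (e1+e0) * β = η2 + (e0+e1)*β by ring] at c2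
    · exfalso; rw [s0] at x0; simp at x0
    · rcases lt_trichotomy e1 0 with s1 | s1 | s1
      · rcases lt_trichotomy e2 0 with s2 | s2 | s2
        · -- (+,-,-) negate → core2 ((-e1),(-e2),(-e0))
          have hd1 : 1 ≤ e0 + e2 := by
            rcases mul_pos_iff.mp x1 with ⟨h, _⟩ | ⟨_, h⟩ <;> linarith
          have hd2 : 1 ≤ e0 + e1 := by
            rcases mul_pos_iff.mp x2 with ⟨h, _⟩ | ⟨_, h⟩ <;> linarith
          obtain ⟨c1, c2, c3⟩ := esch_core2 (-e1) (-e2) (-e0) (-β) η1 η2 η0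
            (by linarith) (by linarith) (by linarith) (by linarith) (by linarith) hβ'
            hη1 hη2 hη0 (by linear_combination -hm)
          refine ⟨?_, ?_, ?_⟩
          · rwa [show η0 + (-e1 + -e2) * -β = η0 + (e1+e2)*β by ring] at c3
          · rwa [show η1 + (-e2 + -e0) * -β = η1 + (e0+e2)*β by ring] at c1
          · rwa [show η2 + (-e1 + -e0) * -β = η2 + (e0+e1)*β by ring] at c2
        · exfalso; rw [s2] at x2; simp at x2
        · -- (+,-,+) → core2 (e0,e2,e1)
          have hd0 : 1 ≤ -(e1 + e2) := by
            rcases mul_pos_iff.mp x0 with ⟨_, h⟩ | ⟨h, _⟩ <;> linarith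
          have hd2 : 1 ≤ -(e0 + e1) := by
            rcases mul_pos_iff.mp x2 with ⟨_, h⟩ | ⟨h, _⟩ <;> linarith
          obtain ⟨c1, c2, c3⟩ := esch_core2 e0 e2 e1 β η0 η2 η1
            (by linarith) (by linarith) (by linarith) (by linarith) (by linarith) hβ
            hη0 hη2 hη1 (by linear_combination hm)
          refine ⟨?_, ?_, ?_⟩
          · rwa [show η0 + (e2+e1) * β = η0 + (e1+e2)*β by ring] at c1
          · rwa [show η1 + (e0+e2) * β = η1 + (e0+e2)*β by ring] at c3
          · rwa [show η2 + (e0+e1) * β = η2 + (e0+e1)*β by ring] at c2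
      · exfalso; rw [s1] at x1; simp at x1
      · rcases lt_trichotomy e2 0 with s2 | s2 | s2
        · -- (+,+,-) → core2 direct
          have hd0 : 1 ≤ -(e1 + e2) := by
            rcases mul_pos_iff.mp x0 with ⟨_, h⟩ | ⟨h, _⟩ <;> linarith
          have hd1 : 1 ≤ -(e0 + e2) := by
            rcases mul_pos_iff.mp x1 with ⟨_, h⟩ | ⟨h, _⟩ <;> linarith
          exact esch_core2 e0 e1 e2 β η0 η1 η2
            (by linarith) (by linarith) (by linarith) hd0 hd1 hβ hη0 hη1 hη2 hm
        · exfalso; rw [s2] at x2; simp at x2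
        · -- (+,+,+) impossible
          exfalso
          have : 0 < e2 * (-(e0+e1)) := x2
          nlinarith
  · -- e_m d_m < 0 for all m : all same sign
    rcases lt_trichotomy e0 0 with s0 | s0 | s0
    · rcases lt_trichotomy e1 0 with s1 | s1 | s1
      · rcases lt_trichotomy e2 0 with s2 | s2 | s2
        · -- (-,-,-) → core0 negated
          obtain ⟨c1, c2, c3⟩ := esch_core0 (-e0) (-e1) (-e2) (-β) η0 η1 η2
            (by linarith) (by linarith) (by linarith) hβ' hη0 hη1 hη2
            (by linear_combination -hm)
          refine ⟨?_, ?_, ?_⟩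
          · rwa [show η0 + (-e1 + -e2) * -β = η0 + (e1+e2)*β by ring] at c1
          · rwa [show η1 + (-e0 + -e2) * -β = η1 + (e0+e2)*β by ring] at c2
          · rwa [show η2 + (-e0 + -e1) * -β = η2 + (e0+e1)*β by ring] at c3
        · exfalso; rw [s2] at x2; simp at x2
        · exfalso; have : 0 < e2 * (-(e0+e1)) := mul_pos (by linarith) (by linarith)
          linarith
      · exfalso; rw [s1] at x1; simp at x1
      · exfalso
        rcases lt_trichotomy e2 0 with s2 | s2 | s2
        · have : 0 < e1 * (-(e0+e2)) := mul_pos (by linarith) (by linarith); linarith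
        · rw [s2] at x2; simp at x2
        · have : 0 < e0 * (-(e1+e2)) := mul_pos_of_neg_of_neg (by linarith) (by linarith)
          linarith
    · exfalso; rw [s0] at x0; simp at x0
    · rcases lt_trichotomy e1 0 with s1 | s1 | s1
      · exfalso
        rcases lt_trichotomy e2 0 with s2 | s2 | s2
        · have : 0 < e0 * (-(e1+e2)) := mul_pos (by linarith) (by linarith); linarith
        · rw [s2] at x2; simp at x2
        · have : 0 < e1 * (-(e0+e2)) := mul_pos_of_neg_of_neg (by linarith) (by linarith)
          linarith
      · exfalso; rw [s1] at x1; simp at x1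
      · rcases lt_trichotomy e2 0 with s2 | s2 | s2
        · exfalso
          have : 0 < e2 * (-(e0+e1)) := mul_pos_of_neg_of_neg (by linarith) (by linarith)
          linarith
        · exfalso; rw [s2] at x2; simp at x2
        · -- (+,+,+) → core0 direct
          exact esch_core0 e0 e1 e2 β η0 η1 η2
            (by linarith) (by linarith) (by linarith) hβ hη0 hη1 hη2 hm


lemma esch_base (p0 p1 p2 q0 q1 q2 a0 a1 a2 b0 b1 b2 : ℤ)
    (hpq : p0 + p1 + p2 = q0 + q1 + q2)
    (hab : a0 + a1 + a2 = b0 + b1 + b2)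
    (hq : q0 = q1)
    (hsgn : (0 < (q0-p0)*(q2-p0) ∧ 0 < (q0-p1)*(q2-p1) ∧ 0 < (q0-p2)*(q2-p2)) ∨
            ((q0-p0)*(q2-p0) < 0 ∧ (q0-p1)*(q2-p1) < 0 ∧ (q0-p2)*(q2-p2) < 0))
    (h1 : |(p0-q0)*(a1-b1) - (p1-q1)*(a0-b0)| = 1)
    (h2 : |(p0-q1)*(a1-b2) - (p1-q2)*(a0-b1)| = 1)
    (h3 : |(p0-q2)*(a1-b0) - (p1-q0)*(a0-b2)| = 1) :
    |(p0-q1)*(a1-b0) - (p1-q0)*(a0-b1)| = 1 ∧ |(p0-q0)*(a1-b2) - (p1-q2)*(a0-b0)| = 1 ∧ |(p0-q2)*(a1-b1) - (p1-q1)*(a0-b2)| = 1 := by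
  have heq0 : (q0-p0)*(q2-p0) = (q0-p0) * (-((q0-p1)+(q0-p2))) := by
    linear_combination ((1)*p0 + (-1)*q0) * hpq + ((-1)*p0 + (1)*q0) * hq
  have heq1 : (q0-p1)*(q2-p1) = (q0-p1) * (-((q0-p0)+(q0-p2))) := by
    linear_combination ((1)*p1 + (-1)*q0) * hpq + ((-1)*p1 + (1)*q0) * hq
  have heq2 : (q0-p2)*(q2-p2) = (q0-p2) * (-((q0-p0)+(q0-p1))) := by
    linear_combination ((1)*p2 + (-2)*q0 + (1)*q1) * hpq + ((1)*p0 + (1)*p1 + (-1)*q1 + (-1)*q2) * hq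
  have hsgn' : (0 < (q0-p0) * (-((q0-p1)+(q0-p2))) ∧ 0 < (q0-p1) * (-((q0-p0)+(q0-p2))) ∧
      0 < (q0-p2) * (-((q0-p0)+(q0-p1)))) ∨
      ((q0-p0) * (-((q0-p1)+(q0-p2))) < 0 ∧ (q0-p1) * (-((q0-p0)+(q0-p2))) < 0 ∧
      (q0-p2) * (-((q0-p0)+(q0-p1))) < 0) := by
    rcases hsgn with ⟨y0, y1, y2⟩ | ⟨y0, y1, y2⟩
    · exact Or.inl ⟨heq0 ▸ y0, heq1 ▸ y1, heq2 ▸ y2⟩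
    · exact Or.inr ⟨heq0 ▸ y0, heq1 ▸ y1, heq2 ▸ y2⟩
  have hmaster : (q0-p0)*((p0-q2)*(a1-b0) - (p1-q0)*(a0-b2)) + (q0-p1)*((p0-q1)*(a1-b2) - (p1-q2)*(a0-b1)) + (q0-p2)*((p0-q0)*(a1-b1) - (p1-q1)*(a0-b0)) +
      (b0-b1)*((q0-p0)*(q0-p1) + (q0-p1)*(q0-p2) + (q0-p2)*(q0-p0)) = 0 := by
    linear_combination ((1)*a0*p1 + (-1)*a0*q1 + (-1)*a1*p0 + (1)*a1*q0 + (1)*b0*p0 + (-2)*b0*q0 + (1)*b0*q1 + (-1)*b1*p1 + (1)*b1*q0) * hpq + ((-1)*p1*q0 + (1)*p1*q1 + (1)*q0*q0 + (-1)*q0*q1) * hab + ((-1)*a0*p0 + (-1)*a0*p1 + (1)*a0*q1 + (1)*a0*q2 + (1)*a1*p0 + (-1)*a1*q0 + (1)*a2*p1 + (-1)*a2*q0 + (2)*b0*q0 + (-1)*b0*q1 + (-1)*b0*q2) * hq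
  obtain ⟨c1, c2, c3⟩ := esch_core (q0-p0) (q0-p1) (q0-p2) (b0-b1)
    ((p0-q2)*(a1-b0) - (p1-q0)*(a0-b2)) ((p0-q1)*(a1-b2) - (p1-q2)*(a0-b1)) ((p0-q0)*(a1-b1) - (p1-q1)*(a0-b0)) hsgn' h3 h2 h1 hmaster
  have g1 : (p0-q1)*(a1-b0) - (p1-q0)*(a0-b1) = ((p0-q0)*(a1-b1) - (p1-q1)*(a0-b0)) + ((q0-p0)+(q0-p1))*(b0-b1) := by
    linear_combination ((1)*a0 + (1)*a1 + (-2)*b0) * hq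
  have g2 : (p0-q0)*(a1-b2) - (p1-q2)*(a0-b0) = ((p0-q1)*(a1-b2) - (p1-q2)*(a0-b1)) + ((q0-p0)+(q0-p2))*(b0-b1) := by
    linear_combination ((1)*b0 + (-1)*b1) * hpq + ((-1)*q0 + (1)*q1) * hab + ((1)*a0 + (1)*a2 + (-2)*b0) * hq
  have g3 : (p0-q2)*(a1-b1) - (p1-q1)*(a0-b2) = ((p0-q2)*(a1-b0) - (p1-q0)*(a0-b2)) + ((q0-p1)+(q0-p2))*(b0-b1) := by
    linear_combination ((1)*b0 + (-1)*b1) * hpq + ((-1)*q0 + (1)*q1) * hab + ((1)*a1 + (1)*a2 + (-2)*b0) * hq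
  exact ⟨g1 ▸ c3, g2 ▸ c2, g3 ▸ c1⟩


lemma esch_sgn (x y u0 u1 u2 : ℤ)
    (h : (((x<u0∧x<u1∧x<u2) ∨ (u0<x∧u1<x∧u2<x)) ∧ ((y<u0∧y<u1∧y<u2) ∨ (u0<y∧u1<y∧u2<y))) ∨
      (((u0<x∧u0<y) ∨ (x<u0∧y<u0)) ∧ ((u1<x∧u1<y) ∨ (x<u1∧y<u1)) ∧
        ((u2<x∧u2<y) ∨ (x<u2∧y<u2)))) :
    (0 < (x-u0)*(y-u0) ∧ 0 < (x-u1)*(y-u1) ∧ 0 < (x-u2)*(y-u2)) ∨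
    ((x-u0)*(y-u0) < 0 ∧ (x-u1)*(y-u1) < 0 ∧ (x-u2)*(y-u2) < 0) := by
  rcases h with ⟨hx | hx, hy | hy⟩ | ⟨h0, h1, h2⟩
  · exact Or.inl ⟨mul_pos_of_neg_of_neg (by linarith) (by linarith),
      mul_pos_of_neg_of_neg (by linarith) (by linarith),
      mul_pos_of_neg_of_neg (by linarith) (by linarith)⟩
  · exact Or.inr ⟨mul_neg_of_neg_of_pos (by linarith) (by linarith),
      mul_neg_of_neg_of_pos (by linarith) (by linarith),
      mul_neg_of_neg_of_pos (by linarith) (by linarith)⟩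
  · exact Or.inr ⟨mul_neg_of_pos_of_neg (by linarith) (by linarith),
      mul_neg_of_pos_of_neg (by linarith) (by linarith),
      mul_neg_of_pos_of_neg (by linarith) (by linarith)⟩
  · exact Or.inl ⟨mul_pos (by linarith) (by linarith),
      mul_pos (by linarith) (by linarith), mul_pos (by linarith) (by linarith)⟩
  · refine Or.inl ⟨?_, ?_, ?_⟩
    · rcases h0 with ⟨r, s⟩ | ⟨r, s⟩
      · exact mul_pos (by linarith) (by linarith)
      · exact mul_pos_of_neg_of_neg (by linarith) (by linarith)
    · rcases h1 with ⟨r, s⟩ | ⟨r, s⟩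
      · exact mul_pos (by linarith) (by linarith)
      · exact mul_pos_of_neg_of_neg (by linarith) (by linarith)
    · rcases h2 with ⟨r, s⟩ | ⟨r, s⟩
      · exact mul_pos (by linarith) (by linarith)
      · exact mul_pos_of_neg_of_neg (by linarith) (by linarith)

lemma esch_base6 (p0 p1 p2 q0 q1 q2 a0 a1 a2 b0 b1 b2 : ℤ)
    (hpq : p0 + p1 + p2 = q0 + q1 + q2)
    (hab : a0 + a1 + a2 = b0 + b1 + b2)
    (hq : q0 = q1)
    (hsgn : (0 < (q0-p0)*(q2-p0) ∧ 0 < (q0-p1)*(q2-p1) ∧ 0 < (q0-p2)*(q2-p2)) ∨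
            ((q0-p0)*(q2-p0) < 0 ∧ (q0-p1)*(q2-p1) < 0 ∧ (q0-p2)*(q2-p2) < 0))
    (hreg : (|(p0-q0)*(a1-b1) - (p1-q1)*(a0-b0)| = 1 ∧ |(p0-q1)*(a1-b2) - (p1-q2)*(a0-b1)| = 1 ∧ |(p0-q2)*(a1-b0) - (p1-q0)*(a0-b2)| = 1) ∨
            (|(p0-q1)*(a1-b0) - (p1-q0)*(a0-b1)| = 1 ∧ |(p0-q0)*(a1-b2) - (p1-q2)*(a0-b0)| = 1 ∧ |(p0-q2)*(a1-b1) - (p1-q1)*(a0-b2)| = 1)) :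
    |(p0-q0)*(a1-b1) - (p1-q1)*(a0-b0)| = 1 ∧ |(p0-q1)*(a1-b2) - (p1-q2)*(a0-b1)| = 1 ∧ |(p0-q2)*(a1-b0) - (p1-q0)*(a0-b2)| = 1 ∧
    |(p0-q1)*(a1-b0) - (p1-q0)*(a0-b1)| = 1 ∧ |(p0-q0)*(a1-b2) - (p1-q2)*(a0-b0)| = 1 ∧ |(p0-q2)*(a1-b1) - (p1-q1)*(a0-b2)| = 1 := by
  rcases hreg with ⟨h1, h2, h3⟩ | ⟨h1, h2, h3⟩
  · obtain ⟨o1, o2, o3⟩ := esch_base p0 p1 p2 q0 q1 q2 a0 a1 a2 b0 b1 b2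
      hpq hab hq hsgn h1 h2 h3
    exact ⟨h1, h2, h3, o1, o2, o3⟩
  · obtain ⟨o1, o2, o3⟩ := esch_base p0 p1 p2 q0 q1 q2 a0 a1 a2 b1 b0 b2
      hpq (by linarith) hq hsgn
      (by rw [show (p0-q0)*(a1-b0) - (p1-q1)*(a0-b1) = (p0-q1)*(a1-b0) - (p1-q0)*(a0-b1) by rw [hq]]; exact h1)
      (by rw [show (p0-q1)*(a1-b2) - (p1-q2)*(a0-b0) = (p0-q0)*(a1-b2) - (p1-q2)*(a0-b0) by rw [hq]]; exact h2)
      (by rw [show (p0-q2)*(a1-b1) - (p1-q0)*(a0-b2) = (p0-q2)*(a1-b1) - (p1-q1)*(a0-b2) by rw [hq]]; exact h3)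
    refine ⟨?_, ?_, ?_, h1, h2, h3⟩
    · rw [show (p0-q0)*(a1-b1) - (p1-q1)*(a0-b0) = (p0-q1)*(a1-b1) - (p1-q0)*(a0-b0) by rw [hq]]; exact o1
    · rw [show (p0-q1)*(a1-b2) - (p1-q2)*(a0-b1) = (p0-q0)*(a1-b2) - (p1-q2)*(a0-b1) by rw [hq]]; exact o2
    · rw [show (p0-q2)*(a1-b0) - (p1-q0)*(a0-b2) = (p0-q2)*(a1-b0) - (p1-q1)*(a0-b2) by rw [hq]]; exact o3

lemma esch_based6 (p0 p1 p2 q0 q1 q2 a0 a1 a2 b0 b1 b2 : ℤ)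
    (hpq : p0 + p1 + p2 = q0 + q1 + q2)
    (hab : a0 + a1 + a2 = b0 + b1 + b2)
    (hp : p0 = p1)
    (hsgn : (0 < (p0-q0)*(p2-q0) ∧ 0 < (p0-q1)*(p2-q1) ∧ 0 < (p0-q2)*(p2-q2)) ∨
            ((p0-q0)*(p2-q0) < 0 ∧ (p0-q1)*(p2-q1) < 0 ∧ (p0-q2)*(p2-q2) < 0))
    (hreg : (|(p0-q0)*(a1-b1) - (p1-q1)*(a0-b0)| = 1 ∧ |(p0-q1)*(a1-b2) - (p1-q2)*(a0-b1)| = 1 ∧ |(p0-q2)*(a1-b0) - (p1-q0)*(a0-b2)| = 1) ∨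
            (|(p0-q1)*(a1-b0) - (p1-q0)*(a0-b1)| = 1 ∧ |(p0-q0)*(a1-b2) - (p1-q2)*(a0-b0)| = 1 ∧ |(p0-q2)*(a1-b1) - (p1-q1)*(a0-b2)| = 1)) :
    |(p0-q0)*(a1-b1) - (p1-q1)*(a0-b0)| = 1 ∧ |(p0-q1)*(a1-b2) - (p1-q2)*(a0-b1)| = 1 ∧ |(p0-q2)*(a1-b0) - (p1-q0)*(a0-b2)| = 1 ∧
    |(p0-q1)*(a1-b0) - (p1-q0)*(a0-b1)| = 1 ∧ |(p0-q0)*(a1-b2) - (p1-q2)*(a0-b0)| = 1 ∧ |(p0-q2)*(a1-b1) - (p1-q1)*(a0-b2)| = 1 := by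
  have cd0 : (q0-p0)*(b1-a1) - (q1-p1)*(b0-a0) = (p0-q0)*(a1-b1) - (p1-q1)*(a0-b0) := by
    linear_combination (0:ℤ) * hpq
  have cd1 : (q0-p1)*(b1-a2) - (q1-p2)*(b0-a1) = (p0-q2)*(a1-b0) - (p1-q0)*(a0-b2) := by
    linear_combination ((-1)*a1 + (1)*b0) * hpq + ((1)*p1 + (-1)*q0) * hab
  have cd2 : (q0-p2)*(b1-a0) - (q1-p0)*(b0-a2) = (p0-q1)*(a1-b2) - (p1-q2)*(a0-b1) := by
    linear_combination ((1)*a0 + (-1)*b1) * hpq + ((-1)*p0 + (1)*q1) * hab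
  have cd3 : (q0-p1)*(b1-a0) - (q1-p0)*(b0-a1) = -((p0-q1)*(a1-b0) - (p1-q0)*(a0-b1)) := by
    linear_combination (0:ℤ) * hpq
  have cd4 : (q0-p0)*(b1-a2) - (q1-p2)*(b0-a0) = -((p0-q0)*(a1-b2) - (p1-q2)*(a0-b0)) := by
    linear_combination ((-1)*a0 + (1)*b0) * hpq + ((1)*p0 + (-1)*q0) * hab
  have cd5 : (q0-p2)*(b1-a1) - (q1-p1)*(b0-a2) = -((p0-q2)*(a1-b1) - (p1-q1)*(a0-b2)) := by
    linear_combination ((1)*a1 + (-1)*b1) * hpq + ((-1)*p1 + (1)*q1) * hab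
  have hreg' : (|(q0-p0)*(b1-a1) - (q1-p1)*(b0-a0)| = 1 ∧ |(q0-p1)*(b1-a2) - (q1-p2)*(b0-a1)| = 1 ∧ |(q0-p2)*(b1-a0) - (q1-p0)*(b0-a2)| = 1) ∨
      (|(q0-p1)*(b1-a0) - (q1-p0)*(b0-a1)| = 1 ∧ |(q0-p0)*(b1-a2) - (q1-p2)*(b0-a0)| = 1 ∧ |(q0-p2)*(b1-a1) - (q1-p1)*(b0-a2)| = 1) := by
    rcases hreg with ⟨h1, h2, h3⟩ | ⟨h1, h2, h3⟩
    · exact Or.inl ⟨by rw [cd0]; exact h1, by rw [cd1]; exact h3, by rw [cd2]; exact h2⟩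
    · exact Or.inr ⟨by rw [cd3, abs_neg]; exact h1, by rw [cd4, abs_neg]; exact h2,
        by rw [cd5, abs_neg]; exact h3⟩
  obtain ⟨o1, o2, o3, o4, o5, o6⟩ := esch_base6 q0 q1 q2 p0 p1 p2 b0 b1 b2 a0 a1 a2
    hpq.symm hab.symm hp hsgn hreg'
  refine ⟨?_, ?_, ?_, ?_, ?_, ?_⟩
  · rw [← cd0]; exact o1
  · rw [show (p0-q1)*(a1-b2) - (p1-q2)*(a0-b1) = (q0-p2)*(b1-a0) - (q1-p0)*(b0-a2) from by linear_combination -1 * cd2]; exact o3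
  · rw [show (p0-q2)*(a1-b0) - (p1-q0)*(a0-b2) = (q0-p1)*(b1-a2) - (q1-p2)*(b0-a1) from by linear_combination -1 * cd1]; exact o2
  · rw [show (p0-q1)*(a1-b0) - (p1-q0)*(a0-b1) = -((q0-p1)*(b1-a0) - (q1-p0)*(b0-a1)) from by linear_combination cd3, abs_neg]; exact o4
  · rw [show (p0-q0)*(a1-b2) - (p1-q2)*(a0-b0) = -((q0-p0)*(b1-a2) - (q1-p2)*(b0-a0)) from by linear_combination cd4, abs_neg]; exact o5
  · rw [show (p0-q2)*(a1-b1) - (p1-q1)*(a0-b2) = -((q0-p2)*(b1-a1) - (q1-p1)*(b0-a2)) from by linear_combination cd5, abs_neg]; exact o6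


lemma esch_main (p0 p1 p2 q0 q1 q2 a0 a1 a2 b0 b1 b2 : ℤ)
    (hpq : p0 + p1 + p2 = q0 + q1 + q2)
    (hab : a0 + a1 + a2 = b0 + b1 + b2)
    (hcoh : (p0 = p1 ∨ p0 = p2 ∨ p1 = p2) ∨ (q0 = q1 ∨ q0 = q2 ∨ q1 = q2))
    (hpos : (((q0<p0∧q0<p1∧q0<p2) ∨ (p0<q0∧p1<q0∧p2<q0)) ∧ ((q1<p0∧q1<p1∧q1<p2) ∨ (p0<q1∧p1<q1∧p2<q1)) ∧ ((q2<p0∧q2<p1∧q2<p2) ∨ (p0<q2∧p1<q2∧p2<q2))) ∨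
            (((p0<q0∧p0<q1∧p0<q2) ∨ (q0<p0∧q1<p0∧q2<p0)) ∧ ((p1<q0∧p1<q1∧p1<q2) ∨ (q0<p1∧q1<p1∧q2<p1)) ∧ ((p2<q0∧p2<q1∧p2<q2) ∨ (q0<p2∧q1<p2∧q2<p2))))
    (hreg : (|(p0-q0)*(a1-b1) - (p1-q1)*(a0-b0)| = 1 ∧ |(p0-q1)*(a1-b2) - (p1-q2)*(a0-b1)| = 1 ∧ |(p0-q2)*(a1-b0) - (p1-q0)*(a0-b2)| = 1) ∨
            (|(p0-q1)*(a1-b0) - (p1-q0)*(a0-b1)| = 1 ∧ |(p0-q0)*(a1-b2) - (p1-q2)*(a0-b0)| = 1 ∧ |(p0-q2)*(a1-b1) - (p1-q1)*(a0-b2)| = 1)) :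
    |(p0-q0)*(a1-b1) - (p1-q1)*(a0-b0)| = 1 ∧ |(p0-q1)*(a1-b2) - (p1-q2)*(a0-b1)| = 1 ∧ |(p0-q2)*(a1-b0) - (p1-q0)*(a0-b2)| = 1 ∧
    |(p0-q1)*(a1-b0) - (p1-q0)*(a0-b1)| = 1 ∧ |(p0-q0)*(a1-b2) - (p1-q2)*(a0-b0)| = 1 ∧ |(p0-q2)*(a1-b1) - (p1-q1)*(a0-b2)| = 1 := by
  rcases hcoh with (hc | hc | hc) | (hc | hc | hc)
  · have hsgn := esch_sgn p0 p2 q0 q1 q2 (by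
      rcases hpos with hs | hs
      · exact Or.inr ⟨(hs.1).imp (fun h => ⟨h.1, h.2.2⟩) (fun h => ⟨h.1, h.2.2⟩), (hs.2.1).imp (fun h => ⟨h.1, h.2.2⟩) (fun h => ⟨h.1, h.2.2⟩), (hs.2.2).imp (fun h => ⟨h.1, h.2.2⟩) (fun h => ⟨h.1, h.2.2⟩)⟩
      · exact Or.inl ⟨hs.1, hs.2.2⟩)
    rcases hreg with ⟨h1, h2, h3⟩ | ⟨h1, h2, h3⟩
    · obtain ⟨o1, o2, o3, o4, o5, o6⟩ := esch_based6 p0 p1 p2 q0 q1 q2 a0 a1 a2 b0 b1 b2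
        (by linarith) (by linarith) hc hsgn (Or.inl ⟨h1, h2, h3⟩)
      exact ⟨o1, o2, o3, o4, o5, o6⟩
    · obtain ⟨o1, o2, o3, o4, o5, o6⟩ := esch_based6 p0 p1 p2 q0 q1 q2 a0 a1 a2 b0 b1 b2
        (by linarith) (by linarith) hc hsgn (Or.inr ⟨h1, h2, h3⟩)
      exact ⟨o1, o2, o3, o4, o5, o6⟩
  · have hsgn := esch_sgn p2 p1 q0 q1 q2 (by
      rcases hpos with hs | hs
      · exact Or.inr ⟨(hs.1).imp (fun h => ⟨h.2.2, h.2.1⟩) (fun h => ⟨h.2.2, h.2.1⟩), (hs.2.1).imp (fun h => ⟨h.2.2, h.2.1⟩) (fun h => ⟨h.2.2, h.2.1⟩), (hs.2.2).imp (fun h => ⟨h.2.2, h.2.1⟩) (fun h => ⟨h.2.2, h.2.1⟩)⟩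
      · exact Or.inl ⟨hs.2.2, hs.2.1⟩)
    have cw0 : (p2-q0)*(a0-b1) - (p0-q1)*(a2-b0) = (p0-q1)*(a1-b2) - (p1-q2)*(a0-b1) := by linear_combination ((1)*a0 + (-1)*b1) * hpq + ((-1)*p0 + (1)*q1) * hab
    have cw1 : (p2-q1)*(a0-b2) - (p0-q2)*(a2-b1) = (p0-q2)*(a1-b0) - (p1-q0)*(a0-b2) := by linear_combination ((1)*a0 + (-1)*b2) * hpq + ((-1)*p0 + (1)*q2) * hab
    have cw2 : (p2-q2)*(a0-b0) - (p0-q0)*(a2-b2) = (p0-q0)*(a1-b1) - (p1-q1)*(a0-b0) := by linear_combination ((1)*a0 + (-1)*b0) * hpq + ((-1)*p0 + (1)*q0) * hab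
    have cw3 : (p2-q1)*(a0-b0) - (p0-q0)*(a2-b1) = (p0-q0)*(a1-b2) - (p1-q2)*(a0-b0) := by linear_combination ((1)*a0 + (-1)*b0) * hpq + ((-1)*p0 + (1)*q0) * hab
    have cw4 : (p2-q0)*(a0-b2) - (p0-q2)*(a2-b0) = (p0-q2)*(a1-b1) - (p1-q1)*(a0-b2) := by linear_combination ((1)*a0 + (-1)*b2) * hpq + ((-1)*p0 + (1)*q2) * hab
    have cw5 : (p2-q2)*(a0-b1) - (p0-q1)*(a2-b2) = (p0-q1)*(a1-b0) - (p1-q0)*(a0-b1) := by linear_combination ((1)*a0 + (-1)*b1) * hpq + ((-1)*p0 + (1)*q1) * hab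
    rcases hreg with ⟨h1, h2, h3⟩ | ⟨h1, h2, h3⟩
    · obtain ⟨o1, o2, o3, o4, o5, o6⟩ := esch_based6 p2 p0 p1 q0 q1 q2 a2 a0 a1 b0 b1 b2
        (by linarith) (by linarith) hc.symm hsgn (Or.inl ⟨(by rw [cw0]; exact h2), (by rw [cw1]; exact h3), (by rw [cw2]; exact h1)⟩)
      exact ⟨(by rw [← cw2]; exact o3), (by rw [← cw0]; exact o1), (by rw [← cw1]; exact o2), (by rw [← cw5]; exact o6), (by rw [← cw3]; exact o4), (by rw [← cw4]; exact o5)⟩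
    · obtain ⟨o1, o2, o3, o4, o5, o6⟩ := esch_based6 p2 p0 p1 q0 q1 q2 a2 a0 a1 b0 b1 b2
        (by linarith) (by linarith) hc.symm hsgn (Or.inr ⟨(by rw [cw3]; exact h2), (by rw [cw4]; exact h3), (by rw [cw5]; exact h1)⟩)
      exact ⟨(by rw [← cw2]; exact o3), (by rw [← cw0]; exact o1), (by rw [← cw1]; exact o2), (by rw [← cw5]; exact o6), (by rw [← cw3]; exact o4), (by rw [← cw4]; exact o5)⟩
  · have hsgn := esch_sgn p1 p0 q0 q1 q2 (by
      rcases hpos with hs | hs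
      · exact Or.inr ⟨(hs.1).imp (fun h => ⟨h.2.1, h.1⟩) (fun h => ⟨h.2.1, h.1⟩), (hs.2.1).imp (fun h => ⟨h.2.1, h.1⟩) (fun h => ⟨h.2.1, h.1⟩), (hs.2.2).imp (fun h => ⟨h.2.1, h.1⟩) (fun h => ⟨h.2.1, h.1⟩)⟩
      · exact Or.inl ⟨hs.2.1, hs.1⟩)
    have cw0 : (p1-q0)*(a2-b1) - (p2-q1)*(a1-b0) = (p0-q2)*(a1-b0) - (p1-q0)*(a0-b2) := by linear_combination ((-1)*a1 + (1)*b0) * hpq + ((1)*p1 + (-1)*q0) * hab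
    have cw1 : (p1-q1)*(a2-b2) - (p2-q2)*(a1-b1) = (p0-q0)*(a1-b1) - (p1-q1)*(a0-b0) := by linear_combination ((-1)*a1 + (1)*b1) * hpq + ((1)*p1 + (-1)*q1) * hab
    have cw2 : (p1-q2)*(a2-b0) - (p2-q0)*(a1-b2) = (p0-q1)*(a1-b2) - (p1-q2)*(a0-b1) := by linear_combination ((-1)*a1 + (1)*b2) * hpq + ((1)*p1 + (-1)*q2) * hab
    have cw3 : (p1-q1)*(a2-b0) - (p2-q0)*(a1-b1) = (p0-q2)*(a1-b1) - (p1-q1)*(a0-b2) := by linear_combination ((-1)*a1 + (1)*b1) * hpq + ((1)*p1 + (-1)*q1) * hab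
    have cw4 : (p1-q0)*(a2-b2) - (p2-q2)*(a1-b0) = (p0-q1)*(a1-b0) - (p1-q0)*(a0-b1) := by linear_combination ((-1)*a1 + (1)*b0) * hpq + ((1)*p1 + (-1)*q0) * hab
    have cw5 : (p1-q2)*(a2-b1) - (p2-q1)*(a1-b2) = (p0-q0)*(a1-b2) - (p1-q2)*(a0-b0) := by linear_combination ((-1)*a1 + (1)*b2) * hpq + ((1)*p1 + (-1)*q2) * hab
    rcases hreg with ⟨h1, h2, h3⟩ | ⟨h1, h2, h3⟩
    · obtain ⟨o1, o2, o3, o4, o5, o6⟩ := esch_based6 p1 p2 p0 q0 q1 q2 a1 a2 a0 b0 b1 b2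
        (by linarith) (by linarith) hc hsgn (Or.inl ⟨(by rw [cw0]; exact h3), (by rw [cw1]; exact h1), (by rw [cw2]; exact h2)⟩)
      exact ⟨(by rw [← cw1]; exact o2), (by rw [← cw2]; exact o3), (by rw [← cw0]; exact o1), (by rw [← cw4]; exact o5), (by rw [← cw5]; exact o6), (by rw [← cw3]; exact o4)⟩
    · obtain ⟨o1, o2, o3, o4, o5, o6⟩ := esch_based6 p1 p2 p0 q0 q1 q2 a1 a2 a0 b0 b1 b2
        (by linarith) (by linarith) hc hsgn (Or.inr ⟨(by rw [cw3]; exact h3), (by rw [cw4]; exact h1), (by rw [cw5]; exact h2)⟩)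
      exact ⟨(by rw [← cw1]; exact o2), (by rw [← cw2]; exact o3), (by rw [← cw0]; exact o1), (by rw [← cw4]; exact o5), (by rw [← cw5]; exact o6), (by rw [← cw3]; exact o4)⟩
  · have hsgn := esch_sgn q0 q2 p0 p1 p2 (by
      rcases hpos with hs | hs
      · exact Or.inl ⟨hs.1, hs.2.2⟩
      · exact Or.inr ⟨(hs.1).imp (fun h => ⟨h.1, h.2.2⟩) (fun h => ⟨h.1, h.2.2⟩), (hs.2.1).imp (fun h => ⟨h.1, h.2.2⟩) (fun h => ⟨h.1, h.2.2⟩), (hs.2.2).imp (fun h => ⟨h.1, h.2.2⟩) (fun h => ⟨h.1, h.2.2⟩)⟩)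
    rcases hreg with ⟨h1, h2, h3⟩ | ⟨h1, h2, h3⟩
    · obtain ⟨o1, o2, o3, o4, o5, o6⟩ := esch_base6 p0 p1 p2 q0 q1 q2 a0 a1 a2 b0 b1 b2
        (by linarith) (by linarith) hc hsgn (Or.inl ⟨h1, h2, h3⟩)
      exact ⟨o1, o2, o3, o4, o5, o6⟩
    · obtain ⟨o1, o2, o3, o4, o5, o6⟩ := esch_base6 p0 p1 p2 q0 q1 q2 a0 a1 a2 b0 b1 b2
        (by linarith) (by linarith) hc hsgn (Or.inr ⟨h1, h2, h3⟩)
      exact ⟨o1, o2, o3, o4, o5, o6⟩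
  · have hsgn := esch_sgn q2 q1 p0 p1 p2 (by
      rcases hpos with hs | hs
      · exact Or.inl ⟨hs.2.2, hs.2.1⟩
      · exact Or.inr ⟨(hs.1).imp (fun h => ⟨h.2.2, h.2.1⟩) (fun h => ⟨h.2.2, h.2.1⟩), (hs.2.1).imp (fun h => ⟨h.2.2, h.2.1⟩) (fun h => ⟨h.2.2, h.2.1⟩), (hs.2.2).imp (fun h => ⟨h.2.2, h.2.1⟩) (fun h => ⟨h.2.2, h.2.1⟩)⟩)
    rcases hreg with ⟨h1, h2, h3⟩ | ⟨h1, h2, h3⟩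
    · obtain ⟨o1, o2, o3, o4, o5, o6⟩ := esch_base6 p0 p1 p2 q2 q0 q1 a0 a1 a2 b2 b0 b1
        (by linarith) (by linarith) hc.symm hsgn (Or.inl ⟨h3, h1, h2⟩)
      exact ⟨o2, o3, o1, o6, o4, o5⟩
    · obtain ⟨o1, o2, o3, o4, o5, o6⟩ := esch_base6 p0 p1 p2 q2 q0 q1 a0 a1 a2 b2 b0 b1
        (by linarith) (by linarith) hc.symm hsgn (Or.inr ⟨h2, h3, h1⟩)
      exact ⟨o2, o3, o1, o6, o4, o5⟩
  · have hsgn := esch_sgn q1 q0 p0 p1 p2 (by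
      rcases hpos with hs | hs
      · exact Or.inl ⟨hs.2.1, hs.1⟩
      · exact Or.inr ⟨(hs.1).imp (fun h => ⟨h.2.1, h.1⟩) (fun h => ⟨h.2.1, h.1⟩), (hs.2.1).imp (fun h => ⟨h.2.1, h.1⟩) (fun h => ⟨h.2.1, h.1⟩), (hs.2.2).imp (fun h => ⟨h.2.1, h.1⟩) (fun h => ⟨h.2.1, h.1⟩)⟩)
    rcases hreg with ⟨h1, h2, h3⟩ | ⟨h1, h2, h3⟩
    · obtain ⟨o1, o2, o3, o4, o5, o6⟩ := esch_base6 p0 p1 p2 q1 q2 q0 a0 a1 a2 b1 b2 b0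
        (by linarith) (by linarith) hc hsgn (Or.inl ⟨h2, h3, h1⟩)
      exact ⟨o3, o1, o2, o5, o6, o4⟩
    · obtain ⟨o1, o2, o3, o4, o5, o6⟩ := esch_base6 p0 p1 p2 q1 q2 q0 a0 a1 a2 b1 b2 b0
        (by linarith) (by linarith) hc hsgn (Or.inr ⟨h3, h1, h2⟩)
      exact ⟨o3, o1, o2, o5, o6, o4⟩

lemma out_of_Icc (x u0 u1 u2 : ℤ)
    (h : x ∉ Set.Icc (min u0 (min u1 u2)) (max u0 (max u1 u2))) :
    (x < u0 ∧ x < u1 ∧ x < u2) ∨ (u0 < x ∧ u1 < x ∧ u2 < x) := by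
  simp only [Set.mem_Icc, not_and, not_le] at h
  omega



/-- The signed order `N σ` of the isotropy group at the vertex `∗_σ`. -/
def eschN (p q a b : Fin 3 → ℤ) (σ : Equiv.Perm (Fin 3)) : ℤ :=
  (p 0 - q (σ 0)) * (a 1 - b (σ 1)) - (p 1 - q (σ 1)) * (a 0 - b (σ 0))

/-- **Proposition 4.1 in arithmetic form.** Let `E⁷_{p,q}` be a cohomogeneity-two
Eschenburg orbifold (two entries of `p` or of `q` coincide) with an almost free circle
action (`N σ ≠ 0` for all `σ`), such that three vertices of the same parity are regular
(`|N σ| = 1` for all even `σ`, or for all odd `σ`), and such that `E⁷_{p,q}` or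
`E⁷_{q,p}` admits positive curvature. Then `|N σ| = 1` for every permutation `σ`: the
`2`-torus acts freely on `SU(3)` and the quotient is a smooth manifold. -/
theorem cohomogeneity_two_positive_curvature_free
    (p q a b : Fin 3 → ℤ)
    (hpq : p 0 + p 1 + p 2 = q 0 + q 1 + q 2)
    (hab : a 0 + a 1 + a 2 = b 0 + b 1 + b 2)
    (hcoh : (∃ i j : Fin 3, i ≠ j ∧ p i = p j) ∨ (∃ i j : Fin 3, i ≠ j ∧ q i = q j))
    (hfree : ∀ σ : Equiv.Perm (Fin 3), eschN p q a b σ ≠ 0)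
    (hreg : (∀ σ : Equiv.Perm (Fin 3), Equiv.Perm.sign σ = 1 → |eschN p q a b σ| = 1) ∨
      (∀ σ : Equiv.Perm (Fin 3), Equiv.Perm.sign σ = -1 → |eschN p q a b σ| = 1))
    (hposcurv :
      (∀ i : Fin 3, q i ∉
        Set.Icc (min (p 0) (min (p 1) (p 2))) (max (p 0) (max (p 1) (p 2)))) ∨
      (∀ i : Fin 3, p i ∉
        Set.Icc (min (q 0) (min (q 1) (q 2))) (max (q 0) (max (q 1) (q 2))))) :
    ∀ σ : Equiv.Perm (Fin 3), |eschN p q a b σ| = 1 := by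

  set σc : Equiv.Perm (Fin 3) := Equiv.swap 0 1 * Equiv.swap 1 2 with hσc
  set σc2 : Equiv.Perm (Fin 3) := Equiv.swap 1 2 * Equiv.swap 0 1 with hσc2
  set τ01 : Equiv.Perm (Fin 3) := Equiv.swap 0 1 with hτ01
  set τ12 : Equiv.Perm (Fin 3) := Equiv.swap 1 2 with hτ12
  set τ02 : Equiv.Perm (Fin 3) := Equiv.swap 0 2 with hτ02
  have hperm : ∀ τ : Equiv.Perm (Fin 3),
      τ = 1 ∨ τ = σc ∨ τ = σc2 ∨ τ = τ01 ∨ τ = τ12 ∨ τ = τ02 := by decide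
  have E1 : eschN p q a b 1 = (p 0-q 0)*(a 1-b 1) - (p 1-q 1)*(a 0-b 0) := rfl
  have E2 : eschN p q a b σc = (p 0-q 1)*(a 1-b 2) - (p 1-q 2)*(a 0-b 1) := rfl
  have E3 : eschN p q a b σc2 = (p 0-q 2)*(a 1-b 0) - (p 1-q 0)*(a 0-b 2) := rfl
  have E4 : eschN p q a b τ01 = (p 0-q 1)*(a 1-b 0) - (p 1-q 0)*(a 0-b 1) := rfl
  have E5 : eschN p q a b τ12 = (p 0-q 0)*(a 1-b 2) - (p 1-q 2)*(a 0-b 0) := rfl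
  have E6 : eschN p q a b τ02 = (p 0-q 2)*(a 1-b 1) - (p 1-q 1)*(a 0-b 2) := rfl
  have s1 : Equiv.Perm.sign (1 : Equiv.Perm (Fin 3)) = 1 := by decide
  have s2 : Equiv.Perm.sign σc = 1 := by decide
  have s3 : Equiv.Perm.sign σc2 = 1 := by decide
  have s4 : Equiv.Perm.sign τ01 = -1 := by decide
  have s5 : Equiv.Perm.sign τ12 = -1 := by decide
  have s6 : Equiv.Perm.sign τ02 = -1 := by decide
  have aux : ∀ (f : Fin 3 → ℤ), (∃ i j : Fin 3, i ≠ j ∧ f i = f j) →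
      (f 0 = f 1 ∨ f 0 = f 2 ∨ f 1 = f 2) := by
    rintro f ⟨i, j, hij, h⟩
    fin_cases i <;> fin_cases j <;> first
      | exact absurd rfl hij
      | exact Or.inl h
      | exact Or.inl h.symm
      | exact Or.inr (Or.inl h)
      | exact Or.inr (Or.inl h.symm)
      | exact Or.inr (Or.inr h)
      | exact Or.inr (Or.inr h.symm)
  have hcoh' : (p 0 = p 1 ∨ p 0 = p 2 ∨ p 1 = p 2) ∨
      (q 0 = q 1 ∨ q 0 = q 2 ∨ q 1 = q 2) := hcoh.imp (aux p) (aux q)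
  have hpos' : (((q 0<p 0∧q 0<p 1∧q 0<p 2) ∨ (p 0<q 0∧p 1<q 0∧p 2<q 0)) ∧
      ((q 1<p 0∧q 1<p 1∧q 1<p 2) ∨ (p 0<q 1∧p 1<q 1∧p 2<q 1)) ∧
      ((q 2<p 0∧q 2<p 1∧q 2<p 2) ∨ (p 0<q 2∧p 1<q 2∧p 2<q 2))) ∨
      (((p 0<q 0∧p 0<q 1∧p 0<q 2) ∨ (q 0<p 0∧q 1<p 0∧q 2<p 0)) ∧
      ((p 1<q 0∧p 1<q 1∧p 1<q 2) ∨ (q 0<p 1∧q 1<p 1∧q 2<p 1)) ∧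
      ((p 2<q 0∧p 2<q 1∧p 2<q 2) ∨ (q 0<p 2∧q 1<p 2∧q 2<p 2))) := by
    rcases hposcurv with H | H
    · exact Or.inl ⟨out_of_Icc _ _ _ _ (H 0), out_of_Icc _ _ _ _ (H 1),
        out_of_Icc _ _ _ _ (H 2)⟩
    · exact Or.inr ⟨out_of_Icc _ _ _ _ (H 0), out_of_Icc _ _ _ _ (H 1),
        out_of_Icc _ _ _ _ (H 2)⟩
  have hreg' : (|(p 0-q 0)*(a 1-b 1) - (p 1-q 1)*(a 0-b 0)| = 1 ∧
      |(p 0-q 1)*(a 1-b 2) - (p 1-q 2)*(a 0-b 1)| = 1 ∧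
      |(p 0-q 2)*(a 1-b 0) - (p 1-q 0)*(a 0-b 2)| = 1) ∨
      (|(p 0-q 1)*(a 1-b 0) - (p 1-q 0)*(a 0-b 1)| = 1 ∧
      |(p 0-q 0)*(a 1-b 2) - (p 1-q 2)*(a 0-b 0)| = 1 ∧
      |(p 0-q 2)*(a 1-b 1) - (p 1-q 1)*(a 0-b 2)| = 1) := by
    rcases hreg with H | H
    · exact Or.inl ⟨E1 ▸ H 1 s1, E2 ▸ H σc s2, E3 ▸ H σc2 s3⟩
    · exact Or.inr ⟨E4 ▸ H τ01 s4, E5 ▸ H τ12 s5, E6 ▸ H τ02 s6⟩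
  obtain ⟨k1, k2, k3, k4, k5, k6⟩ := esch_main (p 0) (p 1) (p 2) (q 0) (q 1) (q 2)
    (a 0) (a 1) (a 2) (b 0) (b 1) (b 2) hpq hab hcoh' hpos' hreg'
  intro σ
  rcases hperm σ with h | h | h | h | h | h <;> subst h
  · rw [E1]; exact k1
  · rw [E2]; exact k2
  · rw [E3]; exact k3
  · rw [E4]; exact k4
  · rw [E5]; exact k5
  · rw [E6]; exact k6
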